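/- arXiv:0808.0467 — 3 statements merged into one kernel-verified Lean document; each statement's English description precedes it below -/
import Mathlib

section
/- For a complex number s with Re(s) < 1, ∫₀¹ ζ(s,α) dα = 0, where the integral of the Hurwitz zeta function is taken over its second variable. -/
open HurwitzZeta Complex Real Set

lemma dup_of_gt (a : ℝ) (ha : a ∈ Set.Icc (0:ℝ) 1) {s : ℂ} (hs : 1 < s.re) :
    hurwitzZeta ((a/2 : ℝ) : UnitAddCircle) s + hurwitzZeta (((a+1)/2 : ℝ) : UnitAddCircle) s
      = 2 ^ s * hurwitzZeta ((a : ℝ) : UnitAddCircle) s := by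
  obtain ⟨ha0, ha1⟩ := ha
  have h1 := hasSum_hurwitzZeta_of_one_lt_re (a := a/2) ⟨by linarith, by linarith⟩ hs
  have h2 := hasSum_hurwitzZeta_of_one_lt_re (a := (a+1)/2) ⟨by linarith, by linarith⟩ hs
  have h3 := (hasSum_hurwitzZeta_of_one_lt_re (a := a) ⟨ha0, ha1⟩ hs).mul_left ((2:ℂ)^s)
  have h2s : (2:ℂ) ^ s ≠ 0 := by
    rw [Complex.cpow_def_of_ne_zero (by norm_num)]
    exact Complex.exp_ne_zero _
  set F : ℕ → ℂ := fun n => (2:ℂ)^s * (1 / ((n : ℂ) + a) ^ s) with hF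
  have key : ∀ (k : ℕ) (b : ℝ), 0 ≤ b → (((2 * k + b : ℝ) : ℂ)) ^ s
      = (2:ℂ) ^ s * (((k + b/2 : ℝ) : ℂ)) ^ s := by
    intro k b hb
    have : (2 * (k:ℝ) + b) = 2 * ((k:ℝ) + b/2) := by ring
    rw [this, show ((2 * ((k:ℝ) + b/2) : ℝ) : ℂ) = ((2:ℝ):ℂ) * (((k:ℝ) + b/2 : ℝ):ℂ) by push_cast; ring,
      mul_cpow_ofReal_nonneg (by norm_num) (by positivity)]
    norm_num
  have heven : ∀ k : ℕ, F (2 * k) = 1 / ((k : ℂ) + (a/2 : ℝ)) ^ s := by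
    intro k
    have := key k a ha0
    rw [hF]
    simp only
    push_cast at this ⊢
    rw [this, one_div, mul_inv, ← mul_assoc, mul_inv_cancel₀ h2s, one_mul, one_div]
  have hodd : ∀ k : ℕ, F (2 * k + 1) = 1 / ((k : ℂ) + ((a+1)/2 : ℝ)) ^ s := by
    intro k
    have := key k (a + 1) (by linarith)
    rw [hF]
    simp only
    push_cast at this ⊢
    rw [show (2 * (k:ℂ) + 1 + a) = 2 * (k:ℂ) + (a + 1) by ring, this,
      one_div, mul_inv, ← mul_assoc, mul_inv_cancel₀ h2s, one_mul, one_div]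
  have hsum : HasSum F (hurwitzZeta ((a/2 : ℝ) : UnitAddCircle) s
      + hurwitzZeta (((a+1)/2 : ℝ) : UnitAddCircle) s) := by
    refine HasSum.even_add_odd ?_ ?_
    · exact h1.congr_fun fun k => heven k
    · exact h2.congr_fun fun k => hodd k
  exact hsum.unique h3

lemma dup (a : ℝ) (ha : a ∈ Set.Icc (0:ℝ) 1) {s : ℂ} (hs : s ≠ 1) :
    hurwitzZeta ((a/2 : ℝ) : UnitAddCircle) s + hurwitzZeta (((a+1)/2 : ℝ) : UnitAddCircle) s
      = 2 ^ s * hurwitzZeta ((a : ℝ) : UnitAddCircle) s := by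
  set U : Set ℂ := {(1:ℂ)}ᶜ with hU
  have hUo : IsOpen U := isOpen_compl_singleton
  have hUc : IsPreconnected U :=
    (isConnected_compl_singleton_of_one_lt_rank (by simp) _).isPreconnected
  have hf : AnalyticOnNhd ℂ (fun z => hurwitzZeta ((a/2 : ℝ) : UnitAddCircle) z
      + hurwitzZeta (((a+1)/2 : ℝ) : UnitAddCircle) z) U := by
    refine DifferentiableOn.analyticOnNhd (fun z hz => ?_) hUo
    exact ((differentiableAt_hurwitzZeta _ hz).add
      (differentiableAt_hurwitzZeta _ hz)).differentiableWithinAt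
  have hg : AnalyticOnNhd ℂ (fun z => 2 ^ z * hurwitzZeta ((a : ℝ) : UnitAddCircle) z) U := by
    refine DifferentiableOn.analyticOnNhd (fun z hz => ?_) hUo
    exact ((differentiableAt_id.const_cpow (Or.inl two_ne_zero)).mul
      (differentiableAt_hurwitzZeta _ hz)).differentiableWithinAt
  have h2U : (2:ℂ) ∈ U := by norm_num [hU]
  have hev : (fun z => hurwitzZeta ((a/2 : ℝ) : UnitAddCircle) z
      + hurwitzZeta (((a+1)/2 : ℝ) : UnitAddCircle) z) =ᶠ[nhds (2:ℂ)]
      (fun z => 2 ^ z * hurwitzZeta ((a : ℝ) : UnitAddCircle) z) := by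
    filter_upwards [(isOpen_lt continuous_const Complex.continuous_re).mem_nhds
      (by norm_num : (1:ℝ) < (2:ℂ).re)] with z hz
    exact dup_of_gt a ha hz
  exact hf.eqOn_of_preconnected_of_eventuallyEq hg hUc h2U hev hs

theorem integral_hurwitzZeta_eq_zero (s : ℂ) (hs : s.re < 1) :
    ∫ α in (0:ℝ)..1, hurwitzZeta (α : UnitAddCircle) s = 0 := by
  set f : ℝ → ℂ := fun α => hurwitzZeta (α : UnitAddCircle) s with hf
  by_cases hint : IntervalIntegrable f MeasureTheory.volume 0 1
  swap
  · exact intervalIntegral.integral_undef hint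
  have hs1 : s ≠ 1 := by rintro rfl; norm_num at hs
  set I : ℂ := ∫ α in (0:ℝ)..1, f α with hI
  have hmem : (1:ℝ)/2 ∈ uIcc (0:ℝ) 1 := by
    rw [uIcc_of_le (by norm_num : (0:ℝ) ≤ 1)]
    norm_num
  have hL : IntervalIntegrable f MeasureTheory.volume 0 (1/2) :=
    hint.mono_set (uIcc_subset_uIcc left_mem_uIcc hmem)
  have hR : IntervalIntegrable f MeasureTheory.volume (1/2) 1 :=
    hint.mono_set (uIcc_subset_uIcc hmem right_mem_uIcc)
  have hg1 : IntervalIntegrable (fun α => f (α/2)) MeasureTheory.volume 0 1 := by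
    have := hL.comp_mul_right (c := 1/2)
    norm_num at this
    simpa [mul_one_div, div_eq_mul_inv] using this
  have hg2 : IntervalIntegrable (fun α => f ((α+1)/2)) MeasureTheory.volume 0 1 := by
    have h1 : IntervalIntegrable (fun α => f (α * (1/2))) MeasureTheory.volume 1 2 := by
      have := hR.comp_mul_right (c := 1/2)
      norm_num at this
      convert this using 2 
    have := h1.comp_add_right 1
    norm_num at this
    simpa [mul_one_div, div_eq_mul_inv] using this
  -- compute the integrals of the composed maps
  have e1 : (∫ α in (0:ℝ)..1, f (α/2)) = (2:ℝ) • ∫ α in (0:ℝ)..(1/2), f α := by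
    rw [intervalIntegral.integral_comp_div f (two_ne_zero)]
    norm_num
  have e2 : (∫ α in (0:ℝ)..1, f ((α+1)/2)) = (2:ℝ) • ∫ α in (1/2:ℝ)..1, f α := by
    have h := intervalIntegral.integral_comp_add_right (a := (0:ℝ)) (b := 1) (fun α => f (α/2)) 1
    norm_num at h
    rw [h, Complex.real_smul]
    norm_num
  have hsplit : (∫ α in (0:ℝ)..(1/2), f α) + ∫ α in (1/2:ℝ)..1, f α = I :=
    intervalIntegral.integral_add_adjacent_intervals hL hR
  have hsum : (∫ α in (0:ℝ)..1, (f (α/2) + f ((α+1)/2))) = (2:ℝ) • I := by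
    rw [intervalIntegral.integral_add hg1 hg2, e1, e2, ← smul_add, hsplit]
  have hcongr : (∫ α in (0:ℝ)..1, (f (α/2) + f ((α+1)/2))) = ∫ α in (0:ℝ)..1, 2 ^ s * f α := by
    refine intervalIntegral.integral_congr fun α hα => ?_
    rw [uIcc_of_le (by norm_num : (0:ℝ) ≤ 1)] at hα
    exact dup α hα hs1
  have hfin : (2:ℝ) • I = 2 ^ s * I := by
    rw [← hsum, hcongr, intervalIntegral.integral_const_mul]
  have h2s : (2:ℂ) ^ s ≠ 2 := by
    intro h
    rw [show ((2:ℂ)) = ((2:ℝ):ℂ) by norm_num] at h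
    have := congrArg norm h
    rw [Complex.norm_cpow_eq_rpow_re_of_pos two_pos, Complex.norm_real] at this
    norm_num at this
    have h2 : (2:ℝ) ^ s.re < 2 := by
      nth_rewrite 2 [show (2:ℝ) = 2 ^ (1:ℝ) by norm_num]
      exact Real.rpow_lt_rpow_left_iff (by norm_num) |>.mpr hs
    linarith [this ▸ h2]
  have : ((2:ℂ) - 2 ^ s) * I = 0 := by
    have : ((2:ℝ):ℂ) * I = 2 ^ s * I := by rw [Complex.real_smul] at hfin; exact hfin
    push_cast at this
    rw [sub_mul, this, sub_self]
  rcases mul_eq_zero.mp this with h | h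
  · exact absurd (sub_eq_zero.mp h).symm h2s
  · exact h
end

section
/- For s with Re(s) < 1 and any integer r ≥ 0, ∫₀¹ (∂^r/∂s^r ζ)(s,α) dα = 0. -/
open HurwitzZeta Complex Real

open Set MeasureTheory intervalIntegral Filter Finset in
private lemma cp_half_aux {x : ℝ} (hx : 0 ≤ x) (z : ℂ) :
    1 / (((2 * x : ℝ)):ℂ) ^ z = (2:ℂ)^(-z) * (1 / ((x:ℝ):ℂ) ^ z) := by
  rw [Complex.ofReal_mul, mul_cpow_ofReal_nonneg (by norm_num) hx]
  push_cast
  simp only [one_div, mul_inv, Complex.cpow_neg]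

open Set MeasureTheory intervalIntegral Filter Finset in
private lemma hz_dup_series {a : ℝ} (ha : a ∈ Icc (0:ℝ) 1) {z : ℂ} (hz1 : 1 < z.re) :
    hurwitzZeta ((a/2 : ℝ) : UnitAddCircle) z + hurwitzZeta (((a+1)/2 : ℝ) : UnitAddCircle) z
      = (2:ℂ)^z * hurwitzZeta (a : UnitAddCircle) z := by
  have h0 : HasSum (fun n : ℕ => 1 / ((n:ℂ) + a) ^ z) (hurwitzZeta (a : UnitAddCircle) z) :=
    hasSum_hurwitzZeta_of_one_lt_re ha hz1
  have h2z : (2:ℂ)^z ≠ 0 := by simp [Complex.cpow_eq_zero_iff]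
  have ha0 : (0:ℝ) ≤ a := ha.1
  -- rearrange h0 over ℕ ≃ ℕ × Fin 2
  have hE : HasSum ((fun n : ℕ => 1 / ((n:ℂ) + a) ^ z) ∘ (Nat.divModEquiv 2).symm)
      (hurwitzZeta (a : UnitAddCircle) z) := (Equiv.hasSum_iff _).mpr h0
  have hE2 : HasSum (fun q : Fin 2 × ℕ => 1 / (((q.2 * 2 + (q.1:ℕ) : ℕ):ℂ) + a) ^ z)
      (hurwitzZeta (a : UnitAddCircle) z) := by
    have := (Equiv.hasSum_iff (Equiv.prodComm (Fin 2) ℕ)).mpr hE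
    convert this using 2 with q
    rfl
  -- the fiberwise sums
  have hfib : ∀ k : Fin 2, HasSum (fun n : ℕ => 1 / (((n * 2 + (k:ℕ) : ℕ):ℂ) + a) ^ z)
      ((2:ℂ)^(-z) * hurwitzZeta (((a + (k:ℕ))/2 : ℝ) : UnitAddCircle) z) := by
    intro k
    have hk : HasSum (fun n : ℕ => 1 / ((n:ℂ) + (((a + (k:ℕ))/2 : ℝ):ℂ)) ^ z)
        (hurwitzZeta (((a + (k:ℕ))/2 : ℝ) : UnitAddCircle) z) := by
      have hk1 : ((k:ℕ):ℝ) ≤ 1 := by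
        have : (k:ℕ) ≤ 1 := by omega
        exact_mod_cast this
      exact hasSum_hurwitzZeta_of_one_lt_re
        ⟨by positivity, by linarith [ha.2]⟩ hz1
    convert hk.mul_left ((2:ℂ)^(-z)) using 2 with n
    case e'_3 => rfl
    rw [show ((n * 2 + (k:ℕ) : ℕ):ℂ) + (a:ℂ) = ((2 * ((n:ℝ) + (a + (k:ℕ))/2) : ℝ):ℂ) by
          push_cast; ring,
        show ((n:ℂ) + (((a + (k:ℕ))/2 : ℝ):ℂ)) = ((((n:ℝ) + (a + (k:ℕ))/2) : ℝ):ℂ) by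
          push_cast; ring,
        cp_half_aux (add_nonneg (Nat.cast_nonneg n)
          (div_nonneg (add_nonneg ha0 (Nat.cast_nonneg _)) two_pos.le))]
  have hfin : HasSum (fun k : Fin 2 =>
      (2:ℂ)^(-z) * hurwitzZeta (((a + (k:ℕ))/2 : ℝ) : UnitAddCircle) z)
      (hurwitzZeta (a : UnitAddCircle) z) := hE2.prod_fiberwise hfib
  have := hfin.tsum_eq
  rw [tsum_fintype, Fin.sum_univ_two] at this
  simp only [Fin.val_zero, Fin.val_one, Nat.cast_zero, Nat.cast_one, add_zero] at this
  rw [← this]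
  rw [← mul_add, ← mul_assoc, ← Complex.cpow_add _ _ (by norm_num : (2:ℂ) ≠ 0)]
  simp

open Set MeasureTheory intervalIntegral Filter Finset in
private lemma analyticOnNhd_hurwitzZeta' (a : UnitAddCircle) :
    AnalyticOnNhd ℂ (hurwitzZeta a) {(1:ℂ)}ᶜ :=
  DifferentiableOn.analyticOnNhd
    (fun z hz => (differentiableAt_hurwitzZeta a hz).differentiableWithinAt)
    isOpen_compl_singleton

open Set MeasureTheory intervalIntegral Filter Finset in
private lemma hz_dup {a : ℝ} (ha : a ∈ Icc (0:ℝ) 1) {s : ℂ} (hs : s ≠ 1) :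
    hurwitzZeta ((a/2 : ℝ) : UnitAddCircle) s + hurwitzZeta (((a+1)/2 : ℝ) : UnitAddCircle) s
      = (2:ℂ)^s * hurwitzZeta (a : UnitAddCircle) s := by
  have hF : AnalyticOnNhd ℂ (fun z => hurwitzZeta ((a/2 : ℝ) : UnitAddCircle) z
      + hurwitzZeta (((a+1)/2 : ℝ) : UnitAddCircle) z) {(1:ℂ)}ᶜ :=
    fun z hz => ((analyticOnNhd_hurwitzZeta' _ z hz).add (analyticOnNhd_hurwitzZeta' _ z hz))
  have hG : AnalyticOnNhd ℂ (fun z => (2:ℂ)^z * hurwitzZeta (a : UnitAddCircle) z) {(1:ℂ)}ᶜ := by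
    apply DifferentiableOn.analyticOnNhd _ isOpen_compl_singleton
    intro z hz
    exact ((differentiableAt_id.const_cpow (Or.inl two_ne_zero)).mul
      (differentiableAt_hurwitzZeta a hz)).differentiableWithinAt
  have hpre : IsPreconnected ({(1:ℂ)}ᶜ : Set ℂ) := by
    apply (isConnected_compl_singleton_of_one_lt_rank ?_ (1:ℂ)).isPreconnected
    simp
  have h2mem : (2:ℂ) ∈ ({(1:ℂ)}ᶜ : Set ℂ) := by norm_num
  have hev : (fun z => hurwitzZeta ((a/2 : ℝ) : UnitAddCircle) z
      + hurwitzZeta (((a+1)/2 : ℝ) : UnitAddCircle) z)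
      =ᶠ[nhds (2:ℂ)] (fun z => (2:ℂ)^z * hurwitzZeta (a : UnitAddCircle) z) := by
    have hopen : IsOpen {z : ℂ | 1 < z.re} := isOpen_lt continuous_const Complex.continuous_re
    filter_upwards [hopen.mem_nhds (by norm_num : (2:ℂ) ∈ {z : ℂ | 1 < z.re})] with z hz
    exact hz_dup_series ha hz
  exact hF.eqOn_of_preconnected_of_eventuallyEq hG hpre h2mem hev hs

open Set MeasureTheory intervalIntegral Filter Finset in
private lemma anIter {U : Set ℂ} (hU : IsOpen U) {F : ℂ → ℂ} (hF : AnalyticOnNhd ℂ F U) :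
    ∀ r : ℕ, AnalyticOnNhd ℂ (iteratedDeriv r F) U := by
  intro r
  induction r with
  | zero => simpa [iteratedDeriv_zero] using hF
  | succ r ih => rw [iteratedDeriv_succ]; exact ih.deriv_of_isOpen hU

open Set MeasureTheory intervalIntegral Filter Finset in
private lemma iterDeriv_add {U : Set ℂ} (hU : IsOpen U) {F G : ℂ → ℂ}
    (hF : AnalyticOnNhd ℂ F U) (hG : AnalyticOnNhd ℂ G U) (r : ℕ) :
    ∀ s ∈ U, iteratedDeriv r (fun z => F z + G z) s
      = iteratedDeriv r F s + iteratedDeriv r G s := by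
  induction r with
  | zero => intro s _; simp [iteratedDeriv_zero]
  | succ r ih =>
    intro s hs
    rw [iteratedDeriv_succ, iteratedDeriv_succ, iteratedDeriv_succ]
    have hev : iteratedDeriv r (fun z => F z + G z)
        =ᶠ[nhds s] fun z => iteratedDeriv r F z + iteratedDeriv r G z := by
      filter_upwards [hU.mem_nhds hs] with z hz using ih z hz
    rw [hev.deriv_eq]
    exact deriv_add ((anIter hU hF r s hs).differentiableAt)
      ((anIter hU hG r s hs).differentiableAt)

open Set MeasureTheory intervalIntegral Filter Finset in
/-- Leibniz-type lemma for `2^z * h z`. -/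
private lemma iterDeriv_two_cpow_mul (r : ℕ) :
    ∃ c : ℕ → ℂ, c r = 1 ∧ ∀ {U : Set ℂ}, IsOpen U → ∀ {h : ℂ → ℂ}, AnalyticOnNhd ℂ h U →
      ∀ s ∈ U, iteratedDeriv r (fun z => (2:ℂ)^z * h z) s
        = (2:ℂ)^s * ∑ j ∈ Finset.range (r+1), c j * iteratedDeriv j h s := by
  induction r with
  | zero =>
    exact ⟨fun _ => 1, rfl, by intro U hU h hh s hs; simp [iteratedDeriv_zero]⟩
  | succ r ih =>
    obtain ⟨c, hcr, hc⟩ := ih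
    refine ⟨fun j => Complex.log 2 * (if j ≤ r then c j else 0)
      + (if j = 0 then 0 else c (j-1)), by simp [hcr], ?_⟩
    intro U hU h hh s hs
    rw [iteratedDeriv_succ]
    have hev : iteratedDeriv r (fun z => (2:ℂ)^z * h z)
        =ᶠ[nhds s] fun z => (2:ℂ)^z * ∑ j ∈ Finset.range (r+1), c j * iteratedDeriv j h z := by
      filter_upwards [hU.mem_nhds hs] with z hz using hc hU hh z hz
    rw [hev.deriv_eq]
    have hpow : HasDerivAt (fun z : ℂ => (2:ℂ)^z) ((2:ℂ)^s * Complex.log 2) s :=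
      (hasStrictDerivAt_const_cpow (Or.inl two_ne_zero)).hasDerivAt
    have hSd : HasDerivAt (fun z => ∑ j ∈ Finset.range (r+1), c j * iteratedDeriv j h z)
        (∑ j ∈ Finset.range (r+1), c j * iteratedDeriv (j+1) h s) s := by
      apply HasDerivAt.fun_sum
      intro j hj
      have hd : HasDerivAt (iteratedDeriv j h) (iteratedDeriv (j+1) h s) s := by
        rw [iteratedDeriv_succ]
        exact ((anIter hU hh j) s hs).differentiableAt.hasDerivAt
      exact hd.const_mul (c j)
    rw [(hpow.fun_mul hSd).deriv]
    set D : ℕ → ℂ := fun j => iteratedDeriv j h s with hD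
    have e1 : ∑ j ∈ Finset.range (r+2),
        (Complex.log 2 * (if j ≤ r then c j else 0) + (if j = 0 then 0 else c (j-1))) * D j
        = Complex.log 2 * ∑ j ∈ Finset.range (r+1), c j * D j
          + ∑ j ∈ Finset.range (r+1), c j * D (j+1) := by
      simp only [add_mul, mul_assoc]
      rw [Finset.sum_add_distrib, ← Finset.mul_sum]
      congr 1
      · congr 1
        rw [Finset.sum_range_succ, if_neg (by omega), zero_mul, add_zero]
        exact Finset.sum_congr rfl fun j hj => by
          rw [if_pos (by simpa using Nat.lt_succ_iff.mp (Finset.mem_range.mp hj))]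
      · rw [Finset.sum_range_succ']
        simp
    rw [e1]
    ring

noncomputable def gg (s : ℂ) (j : ℕ) (α : ℝ) : ℂ :=
  iteratedDeriv j (fun z => hurwitzZeta (α : UnitAddCircle) z) s

open Set MeasureTheory intervalIntegral Filter Finset in
private lemma key_induction (s : ℂ) (hs : s.re < 1) :
    ∀ (n : ℕ) (d : ℕ → ℂ),
      IntervalIntegrable (fun α : ℝ => ∑ j ∈ Finset.range n, d j * gg s j α) volume 0 1 →
      ∫ α in (0:ℝ)..1, ∑ j ∈ Finset.range n, d j * gg s j α = 0 := by
  have hsU : s ∈ ({(1:ℂ)}ᶜ : Set ℂ) := by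
    rw [Set.mem_compl_singleton_iff]
    rintro rfl
    norm_num at hs
  choose c hc1 hc2 using iterDeriv_two_cpow_mul
  have h2s : (2:ℂ)^s ≠ 0 := by simp [Complex.cpow_eq_zero_iff]
  -- the key pointwise identity for iterated derivatives
  have hE : ∀ (j : ℕ) (α : ℝ), α ∈ Icc (0:ℝ) 1 →
      gg s j (α/2) + gg s j (α/2 + 1/2)
        = (2:ℂ)^s * ∑ i ∈ Finset.range (j+1), c j i * gg s i α := by
    intro j α hα
    have h1 : iteratedDeriv j (fun z => hurwitzZeta ((α/2 : ℝ) : UnitAddCircle) z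
        + hurwitzZeta (((α+1)/2 : ℝ) : UnitAddCircle) z) s
        = gg s j (α/2) + gg s j ((α+1)/2) :=
      iterDeriv_add isOpen_compl_singleton (analyticOnNhd_hurwitzZeta' _)
        (analyticOnNhd_hurwitzZeta' _) j s hsU
    have h2 : Set.EqOn (fun z => hurwitzZeta ((α/2 : ℝ) : UnitAddCircle) z
        + hurwitzZeta (((α+1)/2 : ℝ) : UnitAddCircle) z)
        (fun z => (2:ℂ)^z * hurwitzZeta (α : UnitAddCircle) z) {(1:ℂ)}ᶜ :=
      fun z hz => hz_dup hα (Set.mem_compl_singleton_iff.mp hz)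
    have h3 : gg s j (α/2) + gg s j ((α+1)/2)
        = iteratedDeriv j (fun z => (2:ℂ)^z * hurwitzZeta (α : UnitAddCircle) z) s := by
      rw [← h1]
      exact h2.iteratedDeriv_of_isOpen isOpen_compl_singleton j hsU
    rw [show α/2 + 1/2 = (α+1)/2 by ring, h3]
    exact hc2 j isOpen_compl_singleton (analyticOnNhd_hurwitzZeta' _) s hsU
  intro n
  induction n with
  | zero => intro d _; simp
  | succ r IH =>
    intro d hInt
    set G : ℝ → ℂ := fun α => ∑ j ∈ Finset.range (r+1), d j * gg s j α with hGdef
    set D : ℕ → ℂ := fun i => ∑ j ∈ Finset.range (r+1), d j * (if i ≤ j then c j i else 0)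
      with hDdef
    set H : ℝ → ℂ := fun α => ∑ i ∈ Finset.range (r+1), D i * gg s i α with hHdef
    have hGH : ∀ α ∈ Icc (0:ℝ) 1, G (α/2) + G (α/2 + 1/2) = (2:ℂ)^s * H α := by
      intro α hα
      calc G (α/2) + G (α/2 + 1/2)
          = ∑ j ∈ Finset.range (r+1), d j * (gg s j (α/2) + gg s j (α/2 + 1/2)) := by
            rw [hGdef]
            simp only [mul_add]
            rw [Finset.sum_add_distrib]
        _ = ∑ j ∈ Finset.range (r+1),
              d j * ((2:ℂ)^s * ∑ i ∈ Finset.range (j+1), c j i * gg s i α) :=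
            Finset.sum_congr rfl fun j _ => by rw [hE j α hα]
        _ = (2:ℂ)^s * ∑ j ∈ Finset.range (r+1),
              d j * ∑ i ∈ Finset.range (j+1), c j i * gg s i α := by
            rw [Finset.mul_sum]; exact Finset.sum_congr rfl fun j _ => by ring
        _ = (2:ℂ)^s * H α := by
            congr 1
            have hinner : ∀ j ∈ Finset.range (r+1),
                d j * ∑ i ∈ Finset.range (j+1), c j i * gg s i α
                = ∑ i ∈ Finset.range (r+1),
                    d j * ((if i ≤ j then c j i else 0) * gg s i α) := by
              intro j hj
              rw [Finset.mul_sum]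
              have hsub : ∑ i ∈ Finset.range (j+1), d j * (c j i * gg s i α)
                  = ∑ i ∈ Finset.range (j+1),
                      d j * ((if i ≤ j then c j i else 0) * gg s i α) :=
                Finset.sum_congr rfl fun i hi => by
                  rw [if_pos (Nat.lt_succ_iff.mp (Finset.mem_range.mp hi))]
              rw [hsub]
              apply Finset.sum_subset
                (Finset.range_subset_range.mpr (Nat.succ_le_succ (Nat.lt_succ_iff.mp
                  (Finset.mem_range.mp hj))))
              intro i _ hi
              rw [if_neg (fun hle : i ≤ j => hi (Finset.mem_range.mpr (by omega))),
                zero_mul, mul_zero]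
            rw [Finset.sum_congr rfl hinner, Finset.sum_comm]
            exact Finset.sum_congr rfl fun i _ => by
              rw [hDdef]
              simp only
              rw [Finset.sum_mul]
              exact Finset.sum_congr rfl fun j _ => by ring
    have hDr : D r = d r := by
      rw [hDdef]
      simp only
      rw [Finset.sum_eq_single r
        (fun j hj hne => by
          rw [if_neg (fun hle => hne (le_antisymm (Nat.lt_succ_iff.mp
            (Finset.mem_range.mp hj)) hle)), mul_zero])
        (fun h => absurd (Finset.self_mem_range_succ r) h)]
      rw [if_pos le_rfl, hc1, mul_one]
    -- integrability of the two dilated copies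
    have hmono0 : IntervalIntegrable G volume 0 (1/2) := by
      apply hInt.mono_set
      rw [Set.uIcc_of_le (by norm_num : (0:ℝ) ≤ 1/2), Set.uIcc_of_le (by norm_num : (0:ℝ) ≤ 1)]
      exact Set.Icc_subset_Icc le_rfl (by norm_num)
    have hmono1 : IntervalIntegrable G volume (1/2) 1 := by
      apply hInt.mono_set
      rw [Set.uIcc_of_le (by norm_num : (1/2:ℝ) ≤ 1), Set.uIcc_of_le (by norm_num : (0:ℝ) ≤ 1)]
      exact Set.Icc_subset_Icc (by norm_num) le_rfl
    have h1 : IntervalIntegrable (fun α : ℝ => G (α/2)) volume 0 1 := by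
      have h := hmono0.comp_mul_right (c := 1/2)
      have heq : (fun x : ℝ => G (x * (1/2))) = (fun α : ℝ => G (α/2)) :=
        funext fun x => by rw [show x * (1/2 : ℝ) = x/2 by ring]
      rw [heq] at h
      norm_num at h
      exact h
    have h2 : IntervalIntegrable (fun α : ℝ => G (α/2 + 1/2)) volume 0 1 := by
      have h := (hmono1.comp_add_right (1/2)).comp_mul_right (c := 1/2)
      have heq : (fun x : ℝ => G (x * (1/2) + 1/2)) = (fun α : ℝ => G (α/2 + 1/2)) :=
        funext fun x => by rw [show x * (1/2 : ℝ) = x/2 by ring]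
      rw [heq] at h
      norm_num at h
      exact h
    -- the integral identities
    have i1 : (∫ α in (0:ℝ)..1, G (α/2)) = (2:ℝ) • ∫ x in (0:ℝ)..(1/2:ℝ), G x := by
      rw [intervalIntegral.integral_comp_div G (by norm_num : (2:ℝ) ≠ 0)]
      norm_num
    have i2 : (∫ α in (0:ℝ)..1, G (α/2 + 1/2)) = (2:ℝ) • ∫ x in (1/2:ℝ)..1, G x := by
      rw [intervalIntegral.integral_comp_div_add G (by norm_num : (2:ℝ) ≠ 0) (1/2)]
      norm_num
    have hsplit : (∫ x in (0:ℝ)..(1/2:ℝ), G x) + ∫ x in (1/2:ℝ)..1, G x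
        = ∫ x in (0:ℝ)..1, G x := integral_add_adjacent_intervals hmono0 hmono1
    -- H is interval integrable
    have hHfun : ∀ α ∈ Icc (0:ℝ) 1, H α = ((2:ℂ)^s)⁻¹ * (G (α/2) + G (α/2 + 1/2)) := by
      intro α hα
      rw [hGH α hα, ← mul_assoc, inv_mul_cancel₀ h2s, one_mul]
    have hHI : IntervalIntegrable H volume 0 1 := by
      apply ((h1.add h2).const_mul (((2:ℂ)^s)⁻¹)).congr_ae
      filter_upwards [ae_restrict_mem measurableSet_uIoc] with x hx
      have hx' : x ∈ Icc (0:ℝ) 1 := by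
        rw [Set.uIoc_of_le (by norm_num : (0:ℝ) ≤ 1)] at hx
        exact Set.Ioc_subset_Icc_self hx
      exact (hHfun x hx').symm
    -- the residual is a lower-order combination
    have hHG : (fun α : ℝ => H α - G α)
        = fun α : ℝ => ∑ i ∈ Finset.range r, (D i - d i) * gg s i α := by
      funext α
      calc H α - G α = ∑ i ∈ Finset.range (r+1), (D i - d i) * gg s i α := by
            rw [hHdef, hGdef, ← Finset.sum_sub_distrib]
            exact Finset.sum_congr rfl fun i _ => (sub_mul ..).symm
        _ = ∑ i ∈ Finset.range r, (D i - d i) * gg s i α := by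
            rw [Finset.sum_range_succ, hDr, sub_self, zero_mul, add_zero]
    have hresI : IntervalIntegrable
        (fun α : ℝ => ∑ i ∈ Finset.range r, (D i - d i) * gg s i α) volume 0 1 := by
      rw [← hHG]; exact hHI.sub hInt
    have hres0 : ∫ α in (0:ℝ)..1, (H α - G α) = 0 := by
      rw [hHG]
      exact IH (fun i => D i - d i) hresI
    have hIHeq : (∫ α in (0:ℝ)..1, H α) = ∫ α in (0:ℝ)..1, G α := by
      have h4 : ∫ α in (0:ℝ)..1, (H α - G α)
          = (∫ α in (0:ℝ)..1, H α) - ∫ α in (0:ℝ)..1, G α := integral_sub hHI hInt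
      rw [h4] at hres0
      exact sub_eq_zero.mp hres0
    -- combine everything
    have hLHS : (∫ α in (0:ℝ)..1, (G (α/2) + G (α/2 + 1/2)))
        = (2:ℝ) • ∫ x in (0:ℝ)..1, G x := by
      rw [integral_add h1 h2, i1, i2, ← smul_add, hsplit]
    have hRHS : (∫ α in (0:ℝ)..1, (G (α/2) + G (α/2 + 1/2)))
        = (2:ℂ)^s * ∫ x in (0:ℝ)..1, G x := by
      have hcg : (∫ α in (0:ℝ)..1, (G (α/2) + G (α/2 + 1/2)))
          = ∫ α in (0:ℝ)..1, (2:ℂ)^s * H α := by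
        apply integral_congr
        intro α hα
        have hα' : α ∈ Icc (0:ℝ) 1 := by
          rwa [Set.uIcc_of_le (by norm_num : (0:ℝ) ≤ 1)] at hα
        exact hGH α hα'
      rw [hcg, intervalIntegral.integral_const_mul, hIHeq]
    have heq2 : (2:ℂ) * (∫ x in (0:ℝ)..1, G x) = (2:ℂ)^s * ∫ x in (0:ℝ)..1, G x := by
      have h5 := hLHS.symm.trans hRHS
      rwa [Complex.real_smul, Complex.ofReal_ofNat] at h5
    have hne : (2:ℂ) - (2:ℂ)^s ≠ 0 := by
      rw [sub_ne_zero]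
      intro h
      have habs : ‖(2:ℂ)^s‖ = (2:ℝ) ^ s.re :=
        Complex.norm_cpow_eq_rpow_re_of_pos two_pos s
      rw [← h] at habs
      norm_num at habs
      have hlt : (2:ℝ) ^ s.re < (2:ℝ) ^ (1:ℝ) :=
        (Real.rpow_lt_rpow_left_iff one_lt_two).mpr hs
      rw [Real.rpow_one, ← habs] at hlt
      exact lt_irrefl _ hlt
    have hfin : ((2:ℂ) - (2:ℂ)^s) * (∫ x in (0:ℝ)..1, G x) = 0 := by
      rw [sub_mul, heq2, sub_self]
    exact (mul_eq_zero.mp hfin).resolve_left hne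

theorem integral_iteratedDeriv_hurwitzZeta_eq_zero (s : ℂ) (hs : s.re < 1) (r : ℕ) :
    ∫ α in (0:ℝ)..1, iteratedDeriv r (fun z => hurwitzZeta (α : UnitAddCircle) z) s = 0 := by
  have hc : (fun α : ℝ => ∑ j ∈ Finset.range (r+1),
      (if j = r then (1:ℂ) else 0) * gg s j α)
      = fun α : ℝ => iteratedDeriv r (fun z => hurwitzZeta (α : UnitAddCircle) z) s := by
    funext α
    simp only [ite_mul, one_mul, zero_mul]
    rw [Finset.sum_ite_eq' (Finset.range (r+1)) r (fun j => gg s j α),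
      if_pos (Finset.self_mem_range_succ r)]
    rfl
  by_cases hInt : IntervalIntegrable
      (fun α : ℝ => iteratedDeriv r (fun z => hurwitzZeta (α : UnitAddCircle) z) s)
      MeasureTheory.volume 0 1
  · have := key_induction s hs (r+1) (fun j => if j = r then 1 else 0)
      (by rw [hc]; exact hInt)
    rwa [hc] at this
  · exact intervalIntegral.integral_undef hInt
end

section
/- For a complex s with Re(s) > 1/2 and real α with 0 < α ≤ 1, Parseval's identity gives ∫₀¹ |φ(λ,α,s)|² dλ = ζ(2Re(s), α), where ζ(·,α) is the Hurwitz zeta function. -/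
open Complex Real Filter MeasureTheory Finset Topology ENNReal NNReal

noncomputable def laa (α : ℝ) (s : ℂ) (m : ℕ) : ℂ := ((m : ℂ) + α) ^ (-s)

noncomputable def lea (lam : ℝ) : ℂ := Complex.exp (2 * π * I * lam)

noncomputable def LerchG (lam α : ℝ) (s : ℂ) : ℂ :=
  ∑' m : ℕ, (∑ k ∈ Finset.range (m + 1), lea lam ^ k) * (laa α s m - laa α s (m + 1))

lemma laa_eq {α : ℝ} (hα : 0 < α) (s : ℂ) (m : ℕ) :
    laa α s m = Complex.exp (-s * Real.log ((m : ℝ) + α)) := by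
  have hpos : (0:ℝ) < (m : ℝ) + α := by positivity
  have hb : ((m : ℂ) + α) = (((m : ℝ) + α : ℝ) : ℂ) := by push_cast; ring
  rw [laa, hb, Complex.cpow_def_of_ne_zero (by exact_mod_cast hpos.ne'),
    ← Complex.ofReal_log hpos.le, mul_comm]

lemma norm_laa {α : ℝ} (hα : 0 < α) (s : ℂ) (m : ℕ) :
    ‖laa α s m‖ = ((m : ℝ) + α) ^ (-s.re) := by
  have hpos : (0:ℝ) < (m : ℝ) + α := by positivity
  have hb : ((m : ℂ) + α) = (((m : ℝ) + α : ℝ) : ℂ) := by push_cast; ring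
  rw [laa, hb, Complex.norm_cpow_eq_rpow_re_of_pos hpos, Complex.neg_re]

lemma lea_norm (lam : ℝ) : ‖lea lam‖ = 1 := by
  have : (2 * π * I * lam : ℂ) = ((2 * π * lam : ℝ) : ℂ) * I := by push_cast; ring
  rw [lea, this, Complex.norm_exp_ofReal_mul_I]

lemma lea_ne_one {lam : ℝ} (h0 : 0 < lam) (h1 : lam < 1) : lea lam ≠ 1 := by
  rw [lea, Ne, Complex.exp_eq_one_iff]
  rintro ⟨n, hn⟩
  have h2 : (2 * π * I : ℂ) ≠ 0 := by
    simp [Real.pi_ne_zero, Complex.I_ne_zero]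
  have : (lam : ℂ) = (n : ℂ) := by
    apply mul_left_cancel₀ h2
    rw [mul_comm (n:ℂ) (2 * π * I)] at hn
    linear_combination hn
  have hlam : lam = (n : ℝ) := by exact_mod_cast this
  have h3 : (0:ℝ) < (n:ℝ) := hlam ▸ h0
  have h4 : (n:ℝ) < 1 := hlam ▸ h1
  have h5 : (0:ℤ) < n := by exact_mod_cast h3
  have h6 : n < 1 := by exact_mod_cast h4
  omega

lemma norm_geom {lam : ℝ} (h0 : 0 < lam) (h1 : lam < 1) (n : ℕ) :
    ‖∑ k ∈ Finset.range n, lea lam ^ k‖ ≤ 2 / ‖lea lam - 1‖ := by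
  have hne := lea_ne_one h0 h1
  have hpos : 0 < ‖lea lam - 1‖ := by
    rw [norm_pos_iff, sub_ne_zero]; exact hne
  rw [geom_sum_eq hne, norm_div]
  gcongr
  calc ‖lea lam ^ n - 1‖ ≤ ‖lea lam ^ n‖ + ‖(1:ℂ)‖ := norm_sub_le _ _
    _ ≤ 2 := by rw [norm_pow, lea_norm]; norm_num

lemma laa_diff_bound {α : ℝ} (hα : 0 < α) {s : ℂ} (hσ : 0 ≤ s.re) (m : ℕ) :
    ‖laa α s m - laa α s (m + 1)‖ ≤ ‖s‖ * ((m : ℝ) + α) ^ (-(s.re + 1)) := by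
  set g : ℝ → ℂ := fun t => Complex.exp (-s * Real.log (t + α)) with hg
  set K : Set ℝ := Set.Icc (m : ℝ) ((m : ℝ) + 1) with hK
  have hmem : ∀ t ∈ K, (0:ℝ) < t + α := by
    rintro t ⟨h1, _⟩
    have : (0:ℝ) ≤ (m:ℝ) := Nat.cast_nonneg m
    linarith
  have hderiv : ∀ t ∈ K, HasDerivWithinAt g (-s / (t + α) * g t) K t := by
    intro t ht
    have h1 : HasDerivAt (fun t : ℝ => Real.log (t + α)) (1 / (t + α)) t := by
      simpa [Function.comp_def] using (Real.hasDerivAt_log (hmem t ht).ne').comp t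
        ((hasDerivAt_id t).add_const α)
    have h2 : HasDerivAt (fun t : ℝ => ((Real.log (t + α) : ℝ) : ℂ)) ((1 / (t + α) : ℝ) : ℂ) t :=
      h1.ofReal_comp
    have h3 : HasDerivAt (fun t : ℝ => -s * (Real.log (t + α) : ℂ))
        (-s * ((1 / (t + α) : ℝ) : ℂ)) t := h2.const_mul (-s)
    have h4 := h3.cexp
    refine (HasDerivAt.hasDerivWithinAt ?_)
    refine h4.congr_deriv ?_
    push_cast
    ring
  have hbound : ∀ t ∈ K, ‖-s / (t + α) * g t‖ ≤ ‖s‖ * ((m : ℝ) + α) ^ (-(s.re + 1)) := by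
    intro t ht
    have htpos := hmem t ht
    have hmle : ((m : ℝ) + α) ≤ t + α := by have := ht.1; linarith
    have hnormg : ‖g t‖ = (t + α) ^ (-s.re) := by
      rw [hg]
      simp only [Complex.norm_exp]
      have : (-s * (Real.log (t + α) : ℂ)).re = -s.re * Real.log (t + α) := by
        simp [Complex.mul_re]
      rw [this, Real.rpow_def_of_pos htpos]
      ring_nf
    rw [norm_mul, norm_div, norm_neg, hnormg]
    have habs : ‖((t:ℂ) + α)‖ = t + α := by
      rw [show ((t:ℂ) + α) = ((t + α : ℝ) : ℂ) by push_cast; ring, Complex.norm_real,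
        Real.norm_eq_abs, abs_of_pos htpos]
    rw [habs]
    have key : (t + α)⁻¹ * (t + α) ^ (-s.re) = (t + α) ^ (-(s.re + 1)) := by
      rw [← Real.rpow_neg_one (t+α), ← Real.rpow_add htpos]
      ring_nf
    calc ‖s‖ / (t + α) * (t + α) ^ (-s.re) = ‖s‖ * ((t + α) ^ (-(s.re + 1))) := by
          rw [← key]; ring
      _ ≤ ‖s‖ * ((m : ℝ) + α) ^ (-(s.re + 1)) := by
          exact mul_le_mul_of_nonneg_left
            (Real.rpow_le_rpow_of_nonpos (by positivity) hmle (by linarith)) (norm_nonneg s)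
  have := (convex_Icc (m : ℝ) ((m : ℝ) + 1)).norm_image_sub_le_of_norm_hasDerivWithin_le
    hderiv hbound (Set.left_mem_Icc.2 (by linarith)) (Set.right_mem_Icc.2 (by linarith))
  -- this : ‖g ((m:ℝ)+1) - g (m:ℝ)‖ ≤ C * ‖(m:ℝ)+1 - m‖  -- careful with arg order
  rw [laa_eq hα s m, laa_eq hα s (m+1)]
  have harg : ((m + 1 : ℕ) : ℝ) = (m : ℝ) + 1 := by push_cast; ring
  rw [harg]
  calc ‖Complex.exp (-s * Real.log ((m:ℝ) + α)) - Complex.exp (-s * Real.log ((m:ℝ) + 1 + α))‖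
      = ‖g ((m:ℝ) + 1) - g (m:ℝ)‖ := by
        rw [norm_sub_rev, hg]
    _ ≤ ‖s‖ * ((m : ℝ) + α) ^ (-(s.re + 1)) * ‖(m:ℝ) + 1 - (m:ℝ)‖ := this
    _ = ‖s‖ * ((m : ℝ) + α) ^ (-(s.re + 1)) := by norm_num

lemma summable_rpow_shift {α p : ℝ} (hα : 0 < α) (hp : 1 < p) :
    Summable (fun m : ℕ => ((m : ℝ) + α) ^ (-p)) := by
  have := (Real.summable_one_div_nat_add_rpow α p).2 hp
  refine this.congr fun m => ?_
  have hpos : (0:ℝ) < (m : ℝ) + α := by positivity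
  rw [abs_of_pos hpos, Real.rpow_neg hpos.le, one_div]
lemma abel_identity (e : ℂ) (b : ℕ → ℂ) (N : ℕ) :
    ∑ m ∈ Finset.range N, e ^ m * b m =
      (∑ m ∈ Finset.range N, (∑ k ∈ Finset.range (m + 1), e ^ k) * (b m - b (m + 1))) +
        (∑ k ∈ Finset.range N, e ^ k) * b N := by
  induction N with
  | zero => simp
  | succ n ih =>
    rw [Finset.sum_range_succ, ih, Finset.sum_range_succ
      (fun m => (∑ k ∈ Finset.range (m + 1), e ^ k) * (b m - b (m + 1))) n,
      Finset.sum_range_succ (fun k => e ^ k) n]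
    ring

lemma summable_lerch_term {lam α : ℝ} {s : ℂ} (h0 : 0 < lam) (h1 : lam < 1) (hα : 0 < α)
    (hσ : 0 < s.re) :
    Summable (fun m : ℕ =>
      (∑ k ∈ Finset.range (m + 1), lea lam ^ k) * (laa α s m - laa α s (m + 1))) := by
  apply Summable.of_norm
  refine Summable.of_nonneg_of_le (fun m => norm_nonneg _) (fun m => ?_)
    ((summable_rpow_shift hα (by linarith : (1:ℝ) < s.re + 1)).mul_left
      (2 / ‖lea lam - 1‖ * ‖s‖))
  rw [norm_mul, mul_assoc]
  exact mul_le_mul (norm_geom h0 h1 (m + 1)) (laa_diff_bound hα hσ.le m) (norm_nonneg _)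
    (by positivity)

lemma tendsto_partial_lerch {lam α : ℝ} {s : ℂ} (h0 : 0 < lam) (h1 : lam < 1) (hα : 0 < α)
    (hσ : 0 < s.re) :
    Tendsto (fun N => ∑ m ∈ Finset.range N, lea lam ^ m * laa α s m) atTop
      (𝓝 (LerchG lam α s)) := by
  have h1' := (summable_lerch_term h0 h1 hα hσ).hasSum.tendsto_sum_nat
  have h2 : Tendsto (fun N : ℕ => (∑ k ∈ Finset.range N, lea lam ^ k) * laa α s N) atTop
      (𝓝 0) := by
    have hb : ∀ N : ℕ, ‖(∑ k ∈ Finset.range N, lea lam ^ k) * laa α s N‖ ≤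
        (2 / ‖lea lam - 1‖) * (((N : ℝ) + α) ^ (-s.re)) := by
      intro N
      rw [norm_mul, norm_laa hα]
      exact mul_le_mul_of_nonneg_right (norm_geom h0 h1 N) (by positivity)
    have h3 : Tendsto (fun N : ℕ => ((N : ℝ) + α) ^ (-s.re)) atTop (𝓝 (0:ℝ)) :=
      (tendsto_rpow_neg_atTop hσ).comp
        (tendsto_atTop_add_const_right atTop α tendsto_natCast_atTop_atTop)
    have h4 : Tendsto (fun N : ℕ => (2 / ‖lea lam - 1‖) * (((N : ℝ) + α) ^ (-s.re))) atTop
        (𝓝 (0:ℝ)) := by simpa using h3.const_mul (2 / ‖lea lam - 1‖)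
    exact squeeze_zero_norm hb h4
  have := h1'.add h2
  rw [add_zero] at this
  exact this.congr fun N => (abel_identity (lea lam) (laa α s) N).symm

lemma LerchG_eq_tsum {lam α : ℝ} {s : ℂ} (h0 : 0 < lam) (h1 : lam < 1) (hα : 0 < α)
    (hσ : 1 < s.re) :
    LerchG lam α s = ∑' m : ℕ, lea lam ^ m * laa α s m := by
  have hsum : Summable (fun m : ℕ => lea lam ^ m * laa α s m) := by
    apply Summable.of_norm
    have : ∀ m : ℕ, ‖lea lam ^ m * laa α s m‖ = ((m : ℝ) + α) ^ (-s.re) := by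
      intro m
      rw [norm_mul, norm_pow, lea_norm, one_pow, one_mul, norm_laa hα]
    exact (summable_rpow_shift hα hσ).congr fun m => (this m).symm
  exact tendsto_nhds_unique (tendsto_partial_lerch h0 h1 hα (by linarith))
    hsum.hasSum.tendsto_sum_nat

lemma LerchG_differentiableOn {lam α : ℝ} (h0 : 0 < lam) (h1 : lam < 1) (hα : 0 < α)
    (hα1 : α ≤ 1) :
    DifferentiableOn ℂ (LerchG lam α) {s : ℂ | 0 < s.re} := by
  intro s₀ hs₀
  have hs₀re : 0 < s₀.re := hs₀
  set c : ℝ := s₀.re / 2 with hc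
  set R : ℝ := ‖s₀‖ + 1 with hR
  have hcpos : 0 < c := by positivity
  set U : Set ℂ := {s : ℂ | c < s.re} ∩ Metric.ball 0 R with hU
  have hUopen : IsOpen U :=
    (isOpen_lt continuous_const Complex.continuous_re).inter Metric.isOpen_ball
  have hs₀U : s₀ ∈ U := by
    constructor
    · simp only [Set.mem_setOf_eq]; linarith
    · simp only [Metric.mem_ball, dist_zero_right]; linarith
  set B : ℝ := max 1 (α ^ (c - R)) with hB
  have hBpos : 0 < B := lt_of_lt_of_le one_pos (le_max_left _ _)
  have hdiff : DifferentiableOn ℂ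
      (fun s => ∑' m : ℕ,
        (∑ k ∈ Finset.range (m + 1), lea lam ^ k) * (laa α s m - laa α s (m + 1))) U := by
    apply differentiableOn_tsum_of_summable_norm
      (u := fun m : ℕ => (2 / ‖lea lam - 1‖ * (R * B)) * ((m : ℝ) + α) ^ (-(c + 1)))
    · exact (summable_rpow_shift hα (by linarith)).mul_left _
    · intro m
      apply Differentiable.differentiableOn
      have hbase : ((m : ℂ) + α) ≠ 0 := by
        have : (0:ℝ) < (m:ℝ) + α := by positivity
        rw [show ((m : ℂ) + α) = (((m : ℝ) + α : ℝ) : ℂ) by push_cast; ring]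
        exact_mod_cast this.ne'
      have hbase' : ((m + 1 : ℕ) : ℂ) + α ≠ 0 := by
        have : (0:ℝ) < ((m+1:ℕ):ℝ) + α := by positivity
        rw [show (((m+1:ℕ)) : ℂ) + α = ((((m+1:ℕ) : ℝ) + α : ℝ) : ℂ) by push_cast; ring]
        exact_mod_cast this.ne'
      have hd1 : Differentiable ℂ (fun s : ℂ => laa α s m) :=
        differentiable_id.neg.const_cpow (Or.inl hbase)
      have hd2 : Differentiable ℂ (fun s : ℂ => laa α s (m + 1)) :=
        differentiable_id.neg.const_cpow (Or.inl hbase')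
      exact (hd1.sub hd2).const_mul _
    · exact hUopen
    · rintro m w ⟨hw1, hw2⟩
      have hwre : c < w.re := hw1
      have hwre0 : 0 < w.re := lt_trans hcpos hwre
      have hwnorm : ‖w‖ < R := by simpa [dist_zero_right] using hw2
      have hwreR : w.re < R := lt_of_le_of_lt (le_trans (le_abs_self _) (Complex.abs_re_le_norm w)) hwnorm
      have hmpos : (0:ℝ) < (m:ℝ) + α := by positivity
      have hsplit : ((m : ℝ) + α) ^ (-(w.re + 1)) =
          ((m : ℝ) + α) ^ (-(c + 1)) * ((m : ℝ) + α) ^ (c - w.re) := by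
        rw [← Real.rpow_add hmpos]; ring_nf
      have hfac : ((m : ℝ) + α) ^ (c - w.re) ≤ B := by
        rcases le_or_gt 1 ((m:ℝ) + α) with hge | hlt
        · exact le_trans (Real.rpow_le_one_of_one_le_of_nonpos hge (by linarith)) (le_max_left _ _)
        · have hm0 : m = 0 := by
            by_contra hm
            have : (1:ℝ) ≤ (m:ℝ) := by exact_mod_cast Nat.one_le_iff_ne_zero.2 hm
            linarith
          subst hm0
          simp only [Nat.cast_zero, zero_add] at hlt ⊢
          refine le_trans ?_ (le_max_right 1 (α ^ (c - R)))
          exact Real.rpow_le_rpow_of_exponent_ge hα hlt.le (by linarith)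
      calc ‖(∑ k ∈ Finset.range (m + 1), lea lam ^ k) * (laa α w m - laa α w (m + 1))‖
          ≤ (2 / ‖lea lam - 1‖) * (‖w‖ * ((m : ℝ) + α) ^ (-(w.re + 1))) := by
            rw [norm_mul]
            exact mul_le_mul (norm_geom h0 h1 (m + 1)) (laa_diff_bound hα hwre0.le m)
              (norm_nonneg _) (by positivity)
        _ ≤ 2 / ‖lea lam - 1‖ * (R * B) * ((m : ℝ) + α) ^ (-(c + 1)) := by
            rw [hsplit]
            have h2' : (0:ℝ) ≤ 2 / ‖lea lam - 1‖ := by positivity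
            have : ‖w‖ * (((m : ℝ) + α) ^ (-(c + 1)) * ((m : ℝ) + α) ^ (c - w.re)) ≤
                R * B * ((m : ℝ) + α) ^ (-(c + 1)) := by
              have hconv : ‖w‖ * (((m : ℝ) + α) ^ (-(c + 1)) * ((m : ℝ) + α) ^ (c - w.re)) =
                  (‖w‖ * ((m : ℝ) + α) ^ (c - w.re)) * ((m : ℝ) + α) ^ (-(c + 1)) := by ring
              rw [hconv]
              apply mul_le_mul_of_nonneg_right _ (by positivity)
              exact mul_le_mul hwnorm.le hfac (by positivity) (by linarith)
            calc 2 / ‖lea lam - 1‖ * (‖w‖ * (((m : ℝ) + α) ^ (-(c + 1)) * ((m : ℝ) + α) ^ (c - w.re)))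
                ≤ 2 / ‖lea lam - 1‖ * (R * B * ((m : ℝ) + α) ^ (-(c + 1))) :=
                  mul_le_mul_of_nonneg_left this h2'
              _ = 2 / ‖lea lam - 1‖ * (R * B) * ((m : ℝ) + α) ^ (-(c + 1)) := by ring
  exact ((hdiff.differentiableAt (hUopen.mem_nhds hs₀U)).differentiableWithinAt)
lemma phi_eq_LerchG (φ : ℝ → ℝ → ℂ → ℂ)
    (hser : ∀ (lam α : ℝ) (s : ℂ), 0 < α → 1 < s.re →
      φ lam α s = ∑' m : ℕ, Complex.exp (2 * π * I * lam * m) * ((m : ℂ) + α) ^ (-s))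
    (hanal : ∀ (lam α : ℝ), 0 < lam → lam < 1 → 0 < α → Differentiable ℂ (φ lam α))
    {lam α : ℝ} (hl0 : 0 < lam) (hl1 : lam < 1) (hα : 0 < α) (hα1 : α ≤ 1) :
    ∀ s : ℂ, 0 < s.re → φ lam α s = LerchG lam α s := by
  have hopen : IsOpen {s : ℂ | 0 < s.re} := isOpen_lt continuous_const Complex.continuous_re
  have hφ : AnalyticOnNhd ℂ (φ lam α) {s : ℂ | 0 < s.re} :=
    ((hanal lam α hl0 hl1 hα).differentiableOn).analyticOnNhd hopen
  have hG : AnalyticOnNhd ℂ (LerchG lam α) {s : ℂ | 0 < s.re} :=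
    (LerchG_differentiableOn hl0 hl1 hα hα1).analyticOnNhd hopen
  have hpre : IsPreconnected {s : ℂ | 0 < s.re} := (convex_halfSpace_re_gt 0).isPreconnected
  have h2mem : (2 : ℂ) ∈ {s : ℂ | 0 < s.re} := by simp [Set.mem_setOf_eq]
  have hev : φ lam α =ᶠ[𝓝 (2:ℂ)] LerchG lam α := by
    have hopen1 : IsOpen {s : ℂ | 1 < s.re} := isOpen_lt continuous_const Complex.continuous_re
    have hmem1 : {s : ℂ | 1 < s.re} ∈ 𝓝 (2:ℂ) :=
      hopen1.mem_nhds (by simp [Set.mem_setOf_eq])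
    filter_upwards [hmem1] with w hw
    rw [hser lam α w hα hw, LerchG_eq_tsum hl0 hl1 hα hw]
    refine tsum_congr fun m => ?_
    have : Complex.exp (2 * π * I * lam * m) = lea lam ^ m := by
      rw [lea, ← Complex.exp_nat_mul]
      congr 1
      ring
    rw [this, laa]
  exact fun s hσ =>
    AnalyticOnNhd.eqOn_of_preconnected_of_eventuallyEq hφ hG hpre h2mem hev hσ
set_option maxHeartbeats 1000000 in
/-- Parseval's identity in `λ` for the Lerch zeta function `φ(λ, α, s)`, characterized as the
unique function agreeing with the Dirichlet series `∑ e^{2πiλm}(m+α)^{-s}` for `1 < Re s`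
and entire in `s` for `0 < λ < 1`. -/
theorem lerch_parseval_in_lambda (φ : ℝ → ℝ → ℂ → ℂ)
    (hser : ∀ (lam α : ℝ) (s : ℂ), 0 < α → 1 < s.re →
      φ lam α s = ∑' m : ℕ, Complex.exp (2 * π * I * lam * m) * ((m : ℂ) + α) ^ (-s))
    (hanal : ∀ (lam α : ℝ), 0 < lam → lam < 1 → 0 < α → Differentiable ℂ (φ lam α))
    (s : ℂ) (hs : 1/2 < s.re) (α : ℝ) (h0 : 0 < α) (h1 : α ≤ 1) :
    ∫ lam in (0:ℝ)..1, ‖φ lam α s‖ ^ 2 = ∑' m : ℕ, ((m : ℝ) + α) ^ (-(2 * s.re)) := by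
  haveI : Fact ((0:ℝ) < 1) := ⟨one_pos⟩
  have hσ0 : 0 < s.re := by linarith
  -- the coefficient sequence
  set cz : ℤ → ℂ := fun i => if 0 ≤ i then ((i : ℂ) + α) ^ (-s) else 0 with hcz
  have hcznat : ∀ m : ℕ, cz (m : ℤ) = laa α s m := by
    intro m
    simp only [hcz, Int.ofNat_nonneg, if_pos, Int.cast_natCast, laa]
  have hczneg : ∀ i : ℤ, i ∉ Set.range ((↑·) : ℕ → ℤ) → cz i = 0 := by
    intro i hi
    have hni : ¬ (0 ≤ i) := by
      intro h
      exact hi ⟨i.toNat, by simpa using Int.toNat_of_nonneg h⟩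
    simp [hcz, hni]
  have hnormsq : ∀ m : ℕ, ‖laa α s m‖ ^ 2 = ((m:ℝ) + α) ^ (-(2 * s.re)) := by
    intro m
    rw [norm_laa h0, ← Real.rpow_natCast (((m:ℝ)+α) ^ (-s.re)) 2,
      ← Real.rpow_mul (by positivity)]
    norm_num
    ring_nf
  have hsummable : Summable (fun m : ℕ => ((m:ℝ) + α) ^ (-(2 * s.re))) :=
    summable_rpow_shift h0 (by linarith)
  have hinj : Function.Injective ((↑·) : ℕ → ℤ) := fun a b h => by simpa using h
  -- ℓ² membership
  have hsumnat : Summable (fun m : ℕ => ‖cz (m:ℤ)‖ ^ (2:ℝ)) := by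
    refine hsummable.congr fun m => ?_
    rw [hcznat m, ← hnormsq m, ← Real.rpow_natCast ‖laa α s m‖ 2]
    norm_num
  have hmem : Memℓp cz 2 := by
    apply memℓp_gen
    have h2 : ((2:ℝ≥0∞)).toReal = (2:ℝ) := by simp
    rw [h2]
    exact (hinj.summable_iff (fun x hx => by rw [hczneg x hx]; simp)).1 hsumnat
  set y : lp (fun _ : ℤ => ℂ) 2 := ⟨cz, hmem⟩ with hy
  set F2 : Lp ℂ 2 (@AddCircle.haarAddCircle 1 ⟨one_pos⟩) := (fourierBasis (T := 1)).repr.symm y with hF2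
  have hrepr : (fourierBasis (T := 1)).repr F2 = y :=
    (fourierBasis (T := 1)).repr.apply_symm_apply y
  have hcoeff : ∀ i : ℤ, fourierCoeff (⇑F2) i = cz i := by
    intro i
    rw [← fourierBasis_repr, hrepr]
  -- L² sum of the Fourier series
  have hS : HasSum (fun i : ℤ => cz i • fourierLp (T := 1) 2 i) F2 := by
    have h := hasSum_fourier_series_L2 F2
    have heq : (fun i : ℤ => fourierCoeff (⇑F2) i • fourierLp (T := 1) 2 i) =
        fun i : ℤ => cz i • fourierLp (T := 1) 2 i := funext fun i => by rw [hcoeff i]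
    rwa [heq] at h
  have hSnat : HasSum (fun m : ℕ => cz (m:ℤ) • fourierLp (T := 1) 2 (m:ℤ)) F2 :=
    (hinj.hasSum_iff (fun x hx => by rw [hczneg x hx, zero_smul])).2 hS
  have hTL := hSnat.tendsto_sum_nat
  have hTIM := MeasureTheory.tendstoInMeasure_of_tendsto_Lp hTL
  obtain ⟨ns, hns_mono, hae⟩ := hTIM.exists_seq_tendsto_ae
  -- identify coercions of partial sums
  have hcoe : ∀ N : ℕ, (⇑(∑ m ∈ Finset.range N, cz (m:ℤ) • fourierLp (T := 1) 2 (m:ℤ)) :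
      AddCircle (1:ℝ) → ℂ) =ᵐ[@AddCircle.haarAddCircle 1 ⟨one_pos⟩]
      fun x => ∑ m ∈ Finset.range N, cz (m:ℤ) * fourier (m:ℤ) x := by
    intro N
    induction N with
    | zero => simpa [Pi.zero_def] using MeasureTheory.Lp.coeFn_zero (E := ℂ) (p := 2) _
    | succ n ih =>
      rw [Finset.sum_range_succ]
      have h1 := MeasureTheory.Lp.coeFn_add
        (∑ m ∈ Finset.range n, cz (m:ℤ) • fourierLp (T := 1) 2 (m:ℤ)) (cz (n:ℤ) • fourierLp (T := 1) 2 (n:ℤ))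
      have h2 := MeasureTheory.Lp.coeFn_smul (cz (n:ℤ)) (fourierLp (T := 1) 2 (n:ℤ))
      have h3 := coeFn_fourierLp (T := 1) 2 (n:ℤ)
      filter_upwards [h1, h2, h3, ih] with x hx1 hx2 hx3 hx4
      rw [hx1]
      simp only [Pi.add_apply, Finset.sum_range_succ, hx4, hx2, Pi.smul_apply, hx3,
        smul_eq_mul]
  have hae' : ∀ᵐ x ∂(@AddCircle.haarAddCircle 1 ⟨one_pos⟩),
      Tendsto (fun k => ∑ m ∈ Finset.range (ns k), cz (m:ℤ) * fourier (m:ℤ) x) atTop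
        (𝓝 (F2 x)) := by
    filter_upwards [hae, MeasureTheory.ae_all_iff.2 hcoe] with x hx hxall
    refine hx.congr fun k => ?_
    rw [← hxall (ns k)]
  -- pull back to [0,1]
  have hvol : (volume : Measure (AddCircle (1:ℝ))) = @AddCircle.haarAddCircle 1 ⟨one_pos⟩ := by
    rw [AddCircle.volume_eq_smul_haarAddCircle]
    simp
  have hqmp := (AddCircle.measurePreserving_mk (1:ℝ) 0).quasiMeasurePreserving
  have hae'' : ∀ᵐ (lam : ℝ) ∂(volume.restrict (Set.Ioc (0:ℝ) 1)),
      Tendsto (fun k => ∑ m ∈ Finset.range (ns k), cz (m:ℤ) * fourier (m:ℤ)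
        (↑lam : AddCircle (1:ℝ))) atTop (𝓝 (F2 (↑lam : AddCircle (1:ℝ)))) := by
    have hac : (volume : Measure (AddCircle (1:ℝ))) ≪ (@AddCircle.haarAddCircle 1 ⟨one_pos⟩) :=
      Measure.absolutelyContinuous_of_eq hvol
    have hae2 : ∀ᵐ x ∂(volume : Measure (AddCircle (1:ℝ))),
        Tendsto (fun k => ∑ m ∈ Finset.range (ns k), cz (m:ℤ) * fourier (m:ℤ) x) atTop
          (𝓝 (F2 x)) := hac.ae_le hae'
    have := hqmp.tendsto_ae.eventually hae2
    simpa using this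
  -- pointwise convergence to φ on (0,1)
  have hptwise : ∀ lam : ℝ, 0 < lam → lam < 1 →
      Tendsto (fun N => ∑ m ∈ Finset.range N, cz (m:ℤ) * fourier (m:ℤ)
        (↑lam : AddCircle (1:ℝ))) atTop (𝓝 (φ lam α s)) := by
    intro lam hl0 hl1
    have hterm : ∀ m : ℕ, cz (m:ℤ) * fourier (m:ℤ) (↑lam : AddCircle (1:ℝ)) =
        lea lam ^ m * laa α s m := by
      intro m
      have hf : (fourier (m:ℤ) (↑lam : AddCircle (1:ℝ)) : ℂ) = lea lam ^ m := by
        rw [fourier_coe_apply, lea, ← Complex.exp_nat_mul]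
        congr 1
        push_cast
        ring
      rw [hcznat m, hf, mul_comm]
    have htend := tendsto_partial_lerch hl0 hl1 h0 hσ0
    rw [← phi_eq_LerchG φ hser hanal hl0 hl1 h0 h1 s hσ0] at htend
    exact htend.congr fun N => (Finset.sum_congr rfl fun m _ => (hterm m).symm)
  -- a.e. identification on (0,1]
  have hne1 : ∀ᵐ (lam : ℝ) ∂(volume.restrict (Set.Ioc (0:ℝ) 1)), lam ≠ 1 := by
    apply MeasureTheory.ae_restrict_of_ae
    rw [MeasureTheory.ae_iff]
    have : {lam : ℝ | ¬ lam ≠ 1} = {1} := by ext x; simp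
    rw [this]
    exact Real.volume_singleton
  have hkey : (fun lam => ‖φ lam α s‖ ^ 2) =ᵐ[volume.restrict (Set.Ioc (0:ℝ) 1)]
      fun lam => ‖F2 (↑lam : AddCircle (1:ℝ))‖ ^ 2 := by
    filter_upwards [hae'', MeasureTheory.ae_restrict_mem measurableSet_Ioc, hne1]
      with lam ht hmem hne
    have hl1 : lam < 1 := lt_of_le_of_ne hmem.2 hne
    have hsub := (hptwise lam hmem.1 hl1).comp hns_mono.tendsto_atTop
    rw [tendsto_nhds_unique hsub ht]
  -- support of the ℤ-indexed squared norms
  have hsupp : Function.support (fun i : ℤ => ‖cz i‖ ^ 2) ⊆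
      Set.range ((↑·) : ℕ → ℤ) := by
    intro x hx
    by_contra hxr
    exact hx (by simp [hczneg x hxr])
  calc ∫ lam in (0:ℝ)..1, ‖φ lam α s‖ ^ 2
      = ∫ lam in Set.Ioc (0:ℝ) 1, ‖φ lam α s‖ ^ 2 :=
        intervalIntegral.integral_of_le zero_le_one
    _ = ∫ lam in Set.Ioc (0:ℝ) 1, ‖F2 (↑lam : AddCircle (1:ℝ))‖ ^ 2 :=
        MeasureTheory.integral_congr_ae hkey
    _ = ∫ x : AddCircle (1:ℝ), ‖F2 x‖ ^ 2 := by
        have := AddCircle.integral_preimage (1:ℝ) 0 (fun x : AddCircle (1:ℝ) => ‖F2 x‖ ^ 2)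
        simpa using this
    _ = ∫ x : AddCircle (1:ℝ), ‖F2 x‖ ^ 2 ∂(@AddCircle.haarAddCircle 1 ⟨one_pos⟩) := by
        exact congrArg (fun μ => ∫ x : AddCircle (1:ℝ), ‖F2 x‖ ^ 2 ∂μ) hvol
    _ = ∑' i : ℤ, ‖fourierCoeff (⇑F2) i‖ ^ 2 := (tsum_sq_fourierCoeff F2).symm
    _ = ∑' i : ℤ, ‖cz i‖ ^ 2 := tsum_congr fun i => by rw [hcoeff i]
    _ = ∑' m : ℕ, ‖cz (m:ℤ)‖ ^ 2 := (hinj.tsum_eq hsupp).symm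
    _ = ∑' m : ℕ, ((m : ℝ) + α) ^ (-(2 * s.re)) :=
        tsum_congr fun m => by rw [hcznat m, hnormsq m]
end
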